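/- Let k ∈ ℝ, n ≥ 1, and let u : U → ℝ be a C² solution of the k-hyperbolic harmonic equation x_n Δu - k ∂u/∂x_n = 0 on an open subset U of upper half-space {x_n > 0} in ℝ^{n+1}. Then g(x) := x_n^{-(1-n+k)/2} u(x) satisfies Δg - (n-1)/x_n · ∂g/∂x_n + λ g / x_n² = 0 with λ = ¼(n² - (k+1)²). -/

import Mathlib

/-- Partial derivative in the `i`-th coordinate direction. -/
noncomputable def pderiv' {n : ℕ} (i : Fin n)
    (f : EuclideanSpace ℝ (Fin n) → ℝ) (x : EuclideanSpace ℝ (Fin n)) : ℝ :=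
  fderiv ℝ f x (EuclideanSpace.single i 1)

/-- The Euclidean Laplacian `Δ = Σⱼ ∂²/∂xⱼ²`. -/
noncomputable def lap {n : ℕ} (f : EuclideanSpace ℝ (Fin n) → ℝ)
    (x : EuclideanSpace ℝ (Fin n)) : ℝ :=
  ∑ j : Fin n, pderiv' j (pderiv' j f) x

lemma pderiv_rpow_mul {n : ℕ} (β : ℝ) (f : EuclideanSpace ℝ (Fin (n+1)) → ℝ)
    (x : EuclideanSpace ℝ (Fin (n+1))) (hx : 0 < x (Fin.last n))
    (hf : DifferentiableAt ℝ f x) (i : Fin (n+1)) :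
    pderiv' i (fun y => (y (Fin.last n)) ^ β * f y) x
      = (if i = Fin.last n then β * (x (Fin.last n)) ^ (β - 1) else 0) * f x
        + (x (Fin.last n)) ^ β * pderiv' i f x := by
  have hproj : HasFDerivAt (fun y : EuclideanSpace ℝ (Fin (n+1)) => y (Fin.last n))
      (EuclideanSpace.proj (𝕜 := ℝ) (Fin.last n)) x :=
    (EuclideanSpace.proj (𝕜 := ℝ) (Fin.last n)).hasFDerivAt
  have h1 : HasFDerivAt (fun y : EuclideanSpace ℝ (Fin (n+1)) => (y (Fin.last n)) ^ β)
      ((β * (x (Fin.last n)) ^ (β - 1)) • (EuclideanSpace.proj (𝕜 := ℝ) (Fin.last n))) x :=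
    hproj.rpow_const (Or.inl hx.ne')
  have h2 := h1.mul hf.hasFDerivAt
  have h3 := h2.fderiv
  simp only [pderiv']
  rw [show (fun y : EuclideanSpace ℝ (Fin (n+1)) => (y (Fin.last n)) ^ β * f y)
    = (fun y => (y (Fin.last n)) ^ β) * f from rfl, h3]
  simp only [ContinuousLinearMap.add_apply, ContinuousLinearMap.smul_apply, smul_eq_mul,
    PiLp.proj_apply, EuclideanSpace.single_apply]
  by_cases hi : i = Fin.last n
  · simp [hi]; ring
  · rw [if_neg hi, if_neg (fun h => hi h.symm)]
    ring

lemma pderiv'_congr {n : ℕ} {f g : EuclideanSpace ℝ (Fin n) → ℝ}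
    {x : EuclideanSpace ℝ (Fin n)} (h : f =ᶠ[nhds x] g) (i : Fin n) :
    pderiv' i f x = pderiv' i g x := by
  simp only [pderiv']; rw [h.fderiv_eq]

lemma pderiv'_add {n : ℕ} {f g : EuclideanSpace ℝ (Fin n) → ℝ}
    {x : EuclideanSpace ℝ (Fin n)} (hf : DifferentiableAt ℝ f x)
    (hg : DifferentiableAt ℝ g x) (i : Fin n) :
    pderiv' i (fun y => f y + g y) x = pderiv' i f x + pderiv' i g x := by
  simp only [pderiv']; rw [fderiv_fun_add hf hg]; rfl

lemma pderiv'_const_mul {n : ℕ} {f : EuclideanSpace ℝ (Fin n) → ℝ}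
    {x : EuclideanSpace ℝ (Fin n)} (hf : DifferentiableAt ℝ f x) (c : ℝ) (i : Fin n) :
    pderiv' i (fun y => c * f y) x = c * pderiv' i f x := by
  simp only [pderiv']; rw [fderiv_const_mul hf c]; rfl


/-- if `u` is a C² solution of the `k`-hyperbolic harmonic equation
`xₙ Δu - k ∂u/∂xₙ = 0` on an open `U ⊆ {xₙ > 0} ⊆ ℝ^{n+1}`, then
`g(x) := xₙ^{-(1-n+k)/2} u(x)` satisfies the Maaß wave equation
`Δg - (n-1)/xₙ · ∂g/∂xₙ + λ g/xₙ² = 0` with `λ = ¼(n² - (k+1)²)`. -/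
theorem khyperbolic_harmonic_to_maass (n : ℕ) (hn : 1 ≤ n) (k : ℝ)
    (U : Set (EuclideanSpace ℝ (Fin (n + 1)))) (hU : IsOpen U)
    (hUpos : ∀ x ∈ U, 0 < x (Fin.last n))
    (u : EuclideanSpace ℝ (Fin (n + 1)) → ℝ) (hu : ContDiffOn ℝ 2 u U)
    (heq : ∀ x ∈ U, x (Fin.last n) * lap u x - k * pderiv' (Fin.last n) u x = 0) :
    ∀ x ∈ U,
      lap (fun y => (y (Fin.last n)) ^ (-(1 - (n : ℝ) + k) / 2) * u y) x -
        ((n : ℝ) - 1) / x (Fin.last n) *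
          pderiv' (Fin.last n) (fun y => (y (Fin.last n)) ^ (-(1 - (n : ℝ) + k) / 2) * u y) x +
        ((n : ℝ) ^ 2 - (k + 1) ^ 2) / 4 *
          ((x (Fin.last n)) ^ (-(1 - (n : ℝ) + k) / 2) * u x) / (x (Fin.last n)) ^ 2 = 0 := by
  intro x hxU
  set α : ℝ := -(1 - (n : ℝ) + k) / 2 with hα
  set X : ℝ := x (Fin.last n) with hX
  have hx : 0 < X := hUpos x hxU
  have hUx : U ∈ nhds x := hU.mem_nhds hxU
  have hdu : ∀ y ∈ U, DifferentiableAt ℝ u y := fun y hy =>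
    (hu.contDiffAt (hU.mem_nhds hy)).differentiableAt (by norm_num)
  set v : Fin (n + 1) → EuclideanSpace ℝ (Fin (n + 1)) → ℝ := fun j => pderiv' j u with hv
  have hdv : ∀ j, DifferentiableAt ℝ (v j) x := by
    intro j
    have h2 : ContDiffAt ℝ 1 (fderiv ℝ u) x :=
      (hu.contDiffAt hUx).fderiv_right (by norm_num)
    have h3 : DifferentiableAt ℝ (fderiv ℝ u) x := h2.differentiableAt one_ne_zero
    exact h3.clm_apply (differentiableAt_const _)
  -- first derivative formula on U
  have hpd : ∀ (i : Fin (n + 1)), ∀ y ∈ U,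
      pderiv' i (fun z => (z (Fin.last n)) ^ α * u z) y
        = (if i = Fin.last n then α * (y (Fin.last n)) ^ (α - 1) else 0) * u y
          + (y (Fin.last n)) ^ α * v i y :=
    fun i y hy => pderiv_rpow_mul α u y (hUpos y hy) (hdu y hy) i
  -- second derivatives, j ≠ last
  have hsec_ne : ∀ j : Fin (n + 1), j ≠ Fin.last n →
      pderiv' j (pderiv' j (fun z => (z (Fin.last n)) ^ α * u z)) x
        = X ^ α * pderiv' j (v j) x := by
    intro j hj
    have hev : pderiv' j (fun z => (z (Fin.last n)) ^ α * u z)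
        =ᶠ[nhds x] fun y => (y (Fin.last n)) ^ α * v j y := by
      filter_upwards [hUx] with y hy
      rw [hpd j y hy, if_neg hj, zero_mul, zero_add]
    rw [pderiv'_congr hev j, pderiv_rpow_mul α (v j) x hx (hdv j) j, if_neg hj, zero_mul,
      zero_add]
  -- second derivative, j = last
  have hdiffX : ∀ β : ℝ, DifferentiableAt ℝ
      (fun y : EuclideanSpace ℝ (Fin (n + 1)) => (y (Fin.last n)) ^ β) x := by
    intro β
    have hproj : DifferentiableAt ℝ
        (fun y : EuclideanSpace ℝ (Fin (n + 1)) => y (Fin.last n)) x :=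
      (EuclideanSpace.proj (𝕜 := ℝ) (Fin.last n)).hasFDerivAt.differentiableAt
    exact hproj.rpow_const (Or.inl hx.ne')
  have hsec_last :
      pderiv' (Fin.last n) (pderiv' (Fin.last n) (fun z => (z (Fin.last n)) ^ α * u z)) x
        = (α * (α - 1)) * X ^ (α - 1 - 1) * u x + 2 * α * X ^ (α - 1) * v (Fin.last n) x
          + X ^ α * pderiv' (Fin.last n) (v (Fin.last n)) x := by
    have hev : pderiv' (Fin.last n) (fun z => (z (Fin.last n)) ^ α * u z)
        =ᶠ[nhds x] fun y => (y (Fin.last n)) ^ (α - 1) * (α * u y)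
          + (y (Fin.last n)) ^ α * v (Fin.last n) y := by
      filter_upwards [hUx] with y hy
      rw [hpd (Fin.last n) y hy, if_pos rfl]; ring
    rw [pderiv'_congr hev (Fin.last n)]
    have hd1 : DifferentiableAt ℝ
        (fun y : EuclideanSpace ℝ (Fin (n + 1)) => (y (Fin.last n)) ^ (α - 1) * (α * u y)) x :=
      (hdiffX (α - 1)).mul ((hdu x hxU).const_mul α)
    have hd2 : DifferentiableAt ℝ
        (fun y : EuclideanSpace ℝ (Fin (n + 1)) => (y (Fin.last n)) ^ α * v (Fin.last n) y) x :=
      (hdiffX α).mul (hdv (Fin.last n))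
    rw [pderiv'_add hd1 hd2 (Fin.last n),
      pderiv_rpow_mul (α - 1) (fun y => α * u y) x hx ((hdu x hxU).const_mul α) (Fin.last n),
      pderiv_rpow_mul α (v (Fin.last n)) x hx (hdv (Fin.last n)) (Fin.last n),
      if_pos rfl, if_pos rfl, pderiv'_const_mul (hdu x hxU) α (Fin.last n)]
    ring
  -- laplacian of g
  have hlap : lap (fun z => (z (Fin.last n)) ^ α * u z) x
      = X ^ α * lap u x + (α * (α - 1)) * X ^ (α - 1 - 1) * u x
        + 2 * α * X ^ (α - 1) * v (Fin.last n) x := by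
    have hlapu : lap u x = ∑ j : Fin (n + 1), pderiv' j (v j) x := rfl
    rw [lap, hlapu, Fin.sum_univ_castSucc, Fin.sum_univ_castSucc, hsec_last]
    have : ∀ i : Fin n, pderiv' i.castSucc
        (pderiv' i.castSucc (fun z => (z (Fin.last n)) ^ α * u z)) x
          = X ^ α * pderiv' i.castSucc (v i.castSucc) x :=
      fun i => hsec_ne i.castSucc (Fin.castSucc_lt_last i).ne
    rw [Finset.sum_congr rfl fun i _ => this i, ← Finset.mul_sum]
    ring
  -- first derivative at x
  have hpdx : pderiv' (Fin.last n) (fun z => (z (Fin.last n)) ^ α * u z) x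
      = α * X ^ (α - 1) * u x + X ^ α * v (Fin.last n) x := by
    rw [hpd (Fin.last n) x hxU, if_pos rfl]
  rw [hlap, hpdx]
  have e1 : X ^ (α - 1) = X ^ α / X := by
    rw [Real.rpow_sub hx, Real.rpow_one]
  have e2 : X ^ (α - 1 - 1) = X ^ α / X / X := by
    rw [Real.rpow_sub hx, Real.rpow_one, Real.rpow_sub hx, Real.rpow_one]
  have hL : X * lap u x = k * v (Fin.last n) x := by
    have := heq x hxU; rw [← hX] at this; linarith [this]
  have hA : (0 : ℝ) < X ^ α := Real.rpow_pos_of_pos hx α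
  rw [e1, e2]
  have hLap : lap u x = k * v (Fin.last n) x / X := by
    field_simp; linarith [hL]
  rw [hLap, hα]
  field_simp
  ring
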